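/- arXiv:2510.25591 — 5 statements merged into one kernel-verified Lean document; each statement's English description precedes it below -/
import Mathlib

section
/- Let λ be a measure on a measurable space X with 0 < λ(X) < ∞, let S ⊆ X × X be measurable, let g : X → ℝ be measurable and λ-integrable, and set f x := ∫_{S_x} g dλ. Let Φ : ℝ → ℝ be continuous, nondecreasing on [0,∞), convex on [0,∞), with Φ(0) = 0. Define the weight ŵ : X → ℝ by ŵ(y) := 1 + (λ(Sʸ)).toReal / (λ X).toReal. Then, in the extended nonnegative reals, (1/2) · ‖g‖_{Φ,ŵ} ≤ ‖f‖_Φ + ‖g‖_Φ ≤ (1 + λ X) · ‖g‖_{Φ,ŵ}. -/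
open MeasureTheory ENNReal

/-- Weighted Luxemburg functional: the infimum in `ℝ≥0∞` of `ENNReal.ofReal t` over all
real `t > 0` such that `∫⁻ x, ENNReal.ofReal (w x * Φ (|f x| / t)) ∂lam ≤ 1`
(the infimum of the empty family is `∞`). -/
noncomputable def luxW {X : Type*} [MeasurableSpace X] (lam : Measure X)
    (Φ : ℝ → ℝ) (w : X → ℝ) (f : X → ℝ) : ℝ≥0∞ :=
  sInf {r : ℝ≥0∞ | ∃ t : ℝ, 0 < t ∧
    (∫⁻ x, ENNReal.ofReal (w x * Φ (|f x| / t)) ∂lam) ≤ 1 ∧ r = ENNReal.ofReal t}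

theorem stmt_0 {X : Type*} [MeasurableSpace X] (lam : Measure X)
    (hpos : 0 < lam Set.univ) (hfin : lam Set.univ < ⊤)
    (S : Set (X × X)) (hS : MeasurableSet S)
    (g : X → ℝ) (hgmeas : Measurable g) (hgint : Integrable g lam)
    (f : X → ℝ) (hf : ∀ x, f x = ∫ y in {y | (x, y) ∈ S}, g y ∂lam)
    (Φ : ℝ → ℝ) (hΦc : Continuous Φ) (hΦmono : MonotoneOn Φ (Set.Ici 0))
    (hΦconv : ConvexOn ℝ (Set.Ici 0) Φ) (hΦ0 : Φ 0 = 0)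
    (w : X → ℝ)
    (hw : ∀ y, w y = 1 + (lam {x | (x, y) ∈ S}).toReal / (lam Set.univ).toReal) :
    (1 / 2) * luxW lam Φ w g ≤ luxW lam Φ (fun _ => 1) f + luxW lam Φ (fun _ => 1) g ∧
      luxW lam Φ (fun _ => 1) f + luxW lam Φ (fun _ => 1) g ≤
        (1 + lam Set.univ) * luxW lam Φ w g := by
  haveI : IsFiniteMeasure lam := ⟨hfin⟩
  set c : ℝ := (lam Set.univ).toReal with hcdef
  have hc0 : 0 < c := ENNReal.toReal_pos hpos.ne' hfin.ne
  have hΦnn : ∀ x : ℝ, 0 ≤ x → 0 ≤ Φ x := fun x hx =>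
    hΦ0 ▸ hΦmono Set.self_mem_Ici hx hx
  have hsec_le : ∀ y : X, lam {x | (x, y) ∈ S} ≤ lam Set.univ := fun y =>
    measure_mono (Set.subset_univ _)
  have hratio_nn : ∀ y : X, 0 ≤ (lam {x | (x, y) ∈ S}).toReal / c := fun y => by positivity
  have hw1 : ∀ y, 1 ≤ w y := fun y => by
    rw [hw y]; have := hratio_nn y; linarith
  have hw2 : ∀ y, w y ≤ 2 := fun y => by
    rw [hw y]
    have h1 : (lam {x | (x, y) ∈ S}).toReal / c ≤ 1 := by
      rw [div_le_one hc0]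
      exact ENNReal.toReal_mono hfin.ne (hsec_le y)
    linarith
  -- half of Φ: Φ (a / 2) ≤ Φ a / 2 for a ≥ 0
  have hΦhalf : ∀ a : ℝ, 0 ≤ a → Φ (a / 2) ≤ Φ a / 2 := by
    intro a ha
    have := hΦconv.2 (Set.mem_Ici.2 ha) (Set.self_mem_Ici) (by norm_num : (0:ℝ) ≤ (1:ℝ)/2)
      (by norm_num : (0:ℝ) ≤ (1:ℝ)/2) (by norm_num)
    simp only [smul_eq_mul, mul_zero, add_zero, hΦ0] at this
    calc Φ (a / 2) = Φ ((1/2) * a) := by ring_nf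
    _ ≤ 1/2 * Φ a := this
    _ = Φ a / 2 := by ring
  -- Part (a): (1/2) * Lw ≤ Lg
  have parta : (1 / 2 : ℝ≥0∞) * luxW lam Φ w g ≤ luxW lam Φ (fun _ => 1) g := by
    refine le_sInf ?_
    rintro r ⟨t, ht, hint, rfl⟩
    have hmem : ENNReal.ofReal (2 * t) ∈ {r : ℝ≥0∞ | ∃ t' : ℝ, 0 < t' ∧
        (∫⁻ x, ENNReal.ofReal (w x * Φ (|g x| / t')) ∂lam) ≤ 1 ∧
        r = ENNReal.ofReal t'} := by
      refine ⟨2 * t, by positivity, ?_, rfl⟩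
      refine le_trans (lintegral_mono fun y => ?_) hint
      apply ENNReal.ofReal_le_ofReal
      have ha : 0 ≤ |g y| / t := by positivity
      have h1 : |g y| / (2 * t) = (|g y| / t) / 2 := by
        rw [div_div, mul_comm]
      have h2 : Φ (|g y| / (2 * t)) ≤ Φ (|g y| / t) / 2 := by
        rw [h1]; exact hΦhalf _ ha
      have h3 : 0 ≤ Φ (|g y| / (2 * t)) := hΦnn _ (by positivity)
      have h4 := hw2 y
      calc w y * Φ (|g y| / (2 * t)) ≤ 2 * (Φ (|g y| / t) / 2) := by
            apply mul_le_mul h4 h2 h3 (by norm_num)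
      _ = 1 * Φ (|g y| / t) := by ring
    have hle : luxW lam Φ w g ≤ ENNReal.ofReal (2 * t) := sInf_le hmem
    have h2t : ENNReal.ofReal (2 * t) = 2 * ENNReal.ofReal t := by
      rw [ENNReal.ofReal_mul (by norm_num)]
      norm_num
    calc (1 / 2 : ℝ≥0∞) * luxW lam Φ w g ≤ (1 / 2) * (2 * ENNReal.ofReal t) := by
          rw [← h2t]; exact mul_le_mul_right hle _
    _ = ENNReal.ofReal t := by
          rw [← mul_assoc, one_div, ENNReal.inv_mul_cancel two_ne_zero ENNReal.ofNat_ne_top, one_mul]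
  -- Part (b1): Lg ≤ Lw
  have partb1 : luxW lam Φ (fun _ => 1) g ≤ luxW lam Φ w g := by
    apply sInf_le_sInf
    rintro r ⟨t, ht, hint, rfl⟩
    refine ⟨t, ht, le_trans (lintegral_mono fun y => ?_) hint, rfl⟩
    apply ENNReal.ofReal_le_ofReal
    have h3 : 0 ≤ Φ (|g y| / t) := hΦnn _ (by positivity)
    calc (fun _ : X => (1:ℝ)) y * Φ (|g y| / t) = Φ (|g y| / t) := one_mul _
    _ ≤ w y * Φ (|g y| / t) := le_mul_of_one_le_left h3 (hw1 y)
  -- Part (b2): Lf ≤ lam univ * Lw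
  have partb2 : luxW lam Φ (fun _ => 1) f ≤ lam Set.univ * luxW lam Φ w g := by
    have key : ∀ r ∈ {r : ℝ≥0∞ | ∃ t : ℝ, 0 < t ∧
        (∫⁻ x, ENNReal.ofReal (w x * Φ (|g x| / t)) ∂lam) ≤ 1 ∧ r = ENNReal.ofReal t},
        luxW lam Φ (fun _ => 1) f ≤ lam Set.univ * r := by
      rintro r ⟨t, ht, hint, rfl⟩
      -- notation
      set G : X → ℝ := fun y => Φ (|g y| / t) with hGdef
      have hGmeas : Measurable G := hΦc.measurable.comp ((hgmeas.abs).div_const t)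
      have hGnn : ∀ y, 0 ≤ G y := fun y => hΦnn _ (by positivity)
      set F : X → ℝ≥0∞ := fun y => ENNReal.ofReal (G y) with hFdef
      have hFmeas : Measurable F := hGmeas.ennreal_ofReal
      have hFle : (∫⁻ y, F y ∂lam) ≤ 1 := by
        refine le_trans (lintegral_mono fun y => ?_) hint
        exact ENNReal.ofReal_le_ofReal (le_mul_of_one_le_left (hGnn y) (hw1 y))
      have hGint : Integrable G lam := by
        refine ⟨hGmeas.aestronglyMeasurable, ?_⟩
        rw [hasFiniteIntegral_iff_ofReal (ae_of_all _ hGnn)]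
        exact lt_of_le_of_lt hFle one_lt_top
      -- Jensen pointwise bound
      have pointwise : ∀ x : X,
          Φ (|f x| / (t * c)) ≤ c⁻¹ * ∫ y in {y | (x, y) ∈ S}, G y ∂lam := by
        intro x
        set Sx : Set X := {y | (x, y) ∈ S} with hSxdef
        have hSx : MeasurableSet Sx := hS.preimage measurable_prodMk_left
        set h : X → ℝ := Sx.indicator (fun y => |g y| / t) with hhdef
        have hhnn : ∀ y, 0 ≤ h y := fun y =>
          Set.indicator_nonneg (fun y _ => by positivity) y
        have hh_int : Integrable h lam := ((hgint.abs).div_const t).indicator hSx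
        have hΦh : (fun y => Φ (h y)) = Sx.indicator G := by
          funext y
          by_cases hy : y ∈ Sx
          · simp [hhdef, Set.indicator_of_mem hy, hGdef]
          · simp [hhdef, Set.indicator_of_notMem hy, hΦ0]
        have hΦh_int : Integrable (fun y => Φ (h y)) lam := by
          rw [hΦh]; exact hGint.indicator hSx
        haveI : NeZero lam := ⟨fun h0 => by simp [h0] at hpos⟩
        have jensen : Φ (⨍ y, h y ∂lam) ≤ ⨍ y, Φ (h y) ∂lam :=
          hΦconv.map_average_le hΦc.continuousOn isClosed_Ici
            (ae_of_all _ fun y => Set.mem_Ici.2 (hhnn y)) hh_int hΦh_int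
        have havg : ⨍ y, h y ∂lam = c⁻¹ * ∫ y in Sx, |g y| / t ∂lam := by
          rw [average_eq, integral_indicator hSx]
          rfl
        have havgΦ : ⨍ y, Φ (h y) ∂lam = c⁻¹ * ∫ y in Sx, G y ∂lam := by
          rw [average_eq, hΦh, integral_indicator hSx]
          rfl
        have habs : |f x| ≤ ∫ y in Sx, |g y| ∂lam := by
          rw [hf x]
          calc |∫ y in Sx, g y ∂lam| = ‖∫ y in Sx, g y ∂lam‖ := (Real.norm_eq_abs _).symm
          _ ≤ ∫ y in Sx, ‖g y‖ ∂lam := norm_integral_le_integral_norm _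
          _ = ∫ y in Sx, |g y| ∂lam := by simp [Real.norm_eq_abs]
        have hdiv : ∫ y in Sx, |g y| / t ∂lam = (∫ y in Sx, |g y| ∂lam) / t :=
          integral_div t _
        have hstep : |f x| / (t * c) ≤ ⨍ y, h y ∂lam := by
          rw [havg, hdiv]
          have hA : 0 ≤ ∫ y in Sx, |g y| ∂lam :=
            integral_nonneg fun y => abs_nonneg _
          have h1 : |f x| / (t * c) ≤ (∫ y in Sx, |g y| ∂lam) / (t * c) := by
            gcongr
          refine h1.trans (le_of_eq ?_)
          rw [div_eq_mul_inv, div_eq_mul_inv, mul_inv]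
          ring
        have havgnn : 0 ≤ ⨍ y, h y ∂lam := by
          rw [havg]
          have : 0 ≤ ∫ y in Sx, |g y| / t ∂lam := integral_nonneg fun y => by positivity
          positivity
        calc Φ (|f x| / (t * c)) ≤ Φ (⨍ y, h y ∂lam) :=
              hΦmono (Set.mem_Ici.2 (by positivity)) (Set.mem_Ici.2 havgnn) hstep
        _ ≤ ⨍ y, Φ (h y) ∂lam := jensen
        _ = c⁻¹ * ∫ y in Sx, G y ∂lam := havgΦ
      -- lintegral bound for f
      have hIx : ∀ x : X, ENNReal.ofReal (∫ y in {y | (x, y) ∈ S}, G y ∂lam)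
          = ∫⁻ y in {y | (x, y) ∈ S}, F y ∂lam := fun x =>
        ofReal_integral_eq_lintegral_ofReal (hGint.restrict) (ae_of_all _ hGnn)
      -- Tonelli
      set k : X × X → ℝ≥0∞ := S.indicator (fun p => F p.2) with hkdef
      have hkmeas : Measurable k := (hFmeas.comp measurable_snd).indicator hS
      have hinner : ∀ x : X, (∫⁻ y in {y | (x, y) ∈ S}, F y ∂lam) = ∫⁻ y, k (x, y) ∂lam := by
        intro x
        have hSx : MeasurableSet {y | (x, y) ∈ S} := hS.preimage measurable_prodMk_left
        rw [← lintegral_indicator hSx]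
        congr 1
      have hswap : (∫⁻ x, ∫⁻ y, k (x, y) ∂lam ∂lam) = ∫⁻ y, ∫⁻ x, k (x, y) ∂lam ∂lam :=
        lintegral_lintegral_swap hkmeas.aemeasurable
      have hco : ∀ y : X, (∫⁻ x, k (x, y) ∂lam) = F y * lam {x | (x, y) ∈ S} := by
        intro y
        have hSy : MeasurableSet {x | (x, y) ∈ S} := hS.preimage measurable_prodMk_right
        have : (fun x => k (x, y)) = ({x | (x, y) ∈ S}).indicator (fun _ => F y) := by
          funext x
          by_cases hx : (x, y) ∈ S
          · simp [hkdef, Set.indicator_of_mem, hx, Set.indicator_of_mem (a := x)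
              (s := {x | (x, y) ∈ S}) hx]
          · simp [hkdef, Set.indicator_of_notMem, hx, Set.indicator_of_notMem (a := x)
              (s := {x | (x, y) ∈ S}) hx]
        rw [this, lintegral_indicator hSy, setLIntegral_const]
      have hcobound : ∀ y : X, F y * lam {x | (x, y) ∈ S}
          ≤ lam Set.univ * ENNReal.ofReal (w y * G y) := by
        intro y
        set Sy := {x | (x, y) ∈ S}
        have hSyfin : lam Sy ≠ ⊤ := ((hsec_le y).trans_lt hfin).ne
        have h1 : (lam Sy).toReal / c * G y ≤ w y * G y := by
          apply mul_le_mul_of_nonneg_right _ (hGnn y)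
          rw [hw y]
          linarith
        have h2 : ENNReal.ofReal ((lam Sy).toReal / c * G y)
            ≤ ENNReal.ofReal (w y * G y) := ENNReal.ofReal_le_ofReal h1
        have h3 : ENNReal.ofReal ((lam Sy).toReal / c * G y)
            = lam Sy * (lam Set.univ)⁻¹ * F y := by
          rw [ENNReal.ofReal_mul (hratio_nn y), div_eq_mul_inv,
            ENNReal.ofReal_mul (ENNReal.toReal_nonneg),
            ENNReal.ofReal_inv_of_pos hc0, ENNReal.ofReal_toReal hSyfin,
            ENNReal.ofReal_toReal hfin.ne]
        calc F y * lam Sy = lam Set.univ * (lam Set.univ)⁻¹ * (F y * lam Sy) := by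
              rw [ENNReal.mul_inv_cancel hpos.ne' hfin.ne, one_mul]
        _ = lam Set.univ * (lam Sy * (lam Set.univ)⁻¹ * F y) := by ring
        _ ≤ lam Set.univ * ENNReal.ofReal (w y * G y) := by
              rw [← h3]; exact mul_le_mul_right h2 _
      -- the double integral is bounded by lam univ
      have hdouble : (∫⁻ x, ∫⁻ y in {y | (x, y) ∈ S}, F y ∂lam ∂lam) ≤ lam Set.univ := by
        calc (∫⁻ x, ∫⁻ y in {y | (x, y) ∈ S}, F y ∂lam ∂lam)
            = ∫⁻ x, ∫⁻ y, k (x, y) ∂lam ∂lam := by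
              refine lintegral_congr fun x => hinner x
        _ = ∫⁻ y, ∫⁻ x, k (x, y) ∂lam ∂lam := hswap
        _ = ∫⁻ y, F y * lam {x | (x, y) ∈ S} ∂lam := lintegral_congr fun y => hco y
        _ ≤ ∫⁻ y, lam Set.univ * ENNReal.ofReal (w y * G y) ∂lam :=
              lintegral_mono fun y => hcobound y
        _ = lam Set.univ * ∫⁻ y, ENNReal.ofReal (w y * G y) ∂lam :=
              lintegral_const_mul' _ _ hfin.ne
        _ ≤ lam Set.univ * 1 := mul_le_mul_right hint _
        _ = lam Set.univ := mul_one _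
      -- conclude admissibility for f with parameter t*c
      have hadm : (∫⁻ x, ENNReal.ofReal ((fun _ : X => (1:ℝ)) x * Φ (|f x| / (t * c))) ∂lam)
          ≤ 1 := by
        calc (∫⁻ x, ENNReal.ofReal ((fun _ : X => (1:ℝ)) x * Φ (|f x| / (t * c))) ∂lam)
            ≤ ∫⁻ x, ENNReal.ofReal c⁻¹ * (∫⁻ y in {y | (x, y) ∈ S}, F y ∂lam) ∂lam := by
              refine lintegral_mono fun x => ?_
              rw [← hIx x, ← ENNReal.ofReal_mul (by positivity)]
              exact ENNReal.ofReal_le_ofReal (by simpa using pointwise x)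
        _ = ENNReal.ofReal c⁻¹ * ∫⁻ x, ∫⁻ y in {y | (x, y) ∈ S}, F y ∂lam ∂lam :=
              lintegral_const_mul' _ _ ofReal_ne_top
        _ ≤ ENNReal.ofReal c⁻¹ * lam Set.univ := mul_le_mul_right hdouble _
        _ = (lam Set.univ)⁻¹ * lam Set.univ := by
              rw [ENNReal.ofReal_inv_of_pos hc0, ENNReal.ofReal_toReal hfin.ne]
        _ = 1 := ENNReal.inv_mul_cancel hpos.ne' hfin.ne
      have hmem : ENNReal.ofReal (t * c) ∈ {r : ℝ≥0∞ | ∃ t' : ℝ, 0 < t' ∧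
          (∫⁻ x, ENNReal.ofReal ((fun _ : X => (1:ℝ)) x * Φ (|f x| / t')) ∂lam) ≤ 1 ∧
          r = ENNReal.ofReal t'} := ⟨t * c, mul_pos ht hc0, hadm, rfl⟩
      calc luxW lam Φ (fun _ => 1) f ≤ ENNReal.ofReal (t * c) := sInf_le hmem
      _ = lam Set.univ * ENNReal.ofReal t := by
            rw [ENNReal.ofReal_mul ht.le, ENNReal.ofReal_toReal hfin.ne, mul_comm]
    -- combine via division
    have hdiv : luxW lam Φ (fun _ => 1) f / lam Set.univ ≤ luxW lam Φ w g := by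
      refine le_sInf fun r hr => ?_
      rw [ENNReal.div_le_iff_le_mul (Or.inl hpos.ne') (Or.inl hfin.ne)]
      rw [mul_comm]
      exact key r hr
    calc luxW lam Φ (fun _ => 1) f
        = lam Set.univ * (luxW lam Φ (fun _ => 1) f / lam Set.univ) := by
          rw [ENNReal.mul_div_cancel hpos.ne' hfin.ne]
    _ ≤ lam Set.univ * luxW lam Φ w g := mul_le_mul_right hdiv _
  refine ⟨parta.trans le_add_self, ?_⟩
  calc luxW lam Φ (fun _ => 1) f + luxW lam Φ (fun _ => 1) g
      ≤ lam Set.univ * luxW lam Φ w g + luxW lam Φ w g := add_le_add partb2 partb1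
  _ = (1 + lam Set.univ) * luxW lam Φ w g := by rw [add_mul, one_mul, add_comm]
end

section
/- Let λ be a measure on a measurable space X with 0 < λ(X) < ∞, let S ⊆ X × X be measurable, let g : X → ℝ be measurable and λ-integrable, set f x := ∫_{S_x} g dλ, let w : X → ℝ be measurable with w(x) ≥ 0 for all x, let Φ : ℝ → ℝ be continuous, nondecreasing on [0,∞), convex on [0,∞), with Φ(0) = 0, and let t > 0. Then ∫⁻_X ENNReal.ofReal (w x * Φ (|f x| / t)) dλ(x) ≤ (λ X)⁻¹ * ∫⁻_X ENNReal.ofReal (Φ ((λ X).toReal * |g y| / t)) * (∫⁻_{Sʸ} ENNReal.ofReal (w x) dλ(x)) dλ(y). -/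
open MeasureTheory ENNReal

theorem stmt_1 {X : Type*} [MeasurableSpace X] (lam : Measure X)
    (hpos : 0 < lam Set.univ) (hfin : lam Set.univ < ⊤)
    (S : Set (X × X)) (hS : MeasurableSet S)
    (g : X → ℝ) (hgmeas : Measurable g) (hgint : Integrable g lam)
    (f : X → ℝ) (hf : ∀ x, f x = ∫ y in {y | (x, y) ∈ S}, g y ∂lam)
    (w : X → ℝ) (hwmeas : Measurable w) (hwnn : ∀ x, 0 ≤ w x)
    (Φ : ℝ → ℝ) (hΦc : Continuous Φ) (hΦmono : MonotoneOn Φ (Set.Ici 0))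
    (hΦconv : ConvexOn ℝ (Set.Ici 0) Φ) (hΦ0 : Φ 0 = 0)
    (t : ℝ) (ht : 0 < t) :
    (∫⁻ x, ENNReal.ofReal (w x * Φ (|f x| / t)) ∂lam) ≤
      (lam Set.univ)⁻¹ *
        ∫⁻ y, ENNReal.ofReal (Φ ((lam Set.univ).toReal * |g y| / t)) *
          (∫⁻ x in {x | (x, y) ∈ S}, ENNReal.ofReal (w x) ∂lam) ∂lam := by
  haveI : IsFiniteMeasure lam := ⟨hfin⟩
  haveI : NeZero lam := ⟨by
    intro h
    rw [h] at hpos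
    simp at hpos⟩
  set c : ℝ := (lam Set.univ).toReal with hc
  have hc0 : 0 < c := ENNReal.toReal_pos hpos.ne' hfin.ne
  have hΦnn : ∀ z : ℝ, 0 ≤ z → 0 ≤ Φ z := by
    intro z hz
    have := hΦmono (Set.self_mem_Ici) (by exact hz) hz
    simpa [hΦ0] using this
  -- the function φ
  set φ : X → ℝ≥0∞ := fun y => ENNReal.ofReal (Φ (c * |g y| / t)) with hφ
  have hGmeas : Measurable fun y => Φ (c * |g y| / t) :=
    hΦc.measurable.comp ((hgmeas.abs.const_mul c).div_const t)
  have hφmeas : Measurable φ := hGmeas.ennreal_ofReal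
  -- pointwise key inequality
  have key : ∀ x, ENNReal.ofReal (w x * Φ (|f x| / t)) ≤
      ENNReal.ofReal (w x) *
        ((lam Set.univ)⁻¹ * ∫⁻ y in {y | (x, y) ∈ S}, φ y ∂lam) := by
    intro x
    set s : Set X := {y | (x, y) ∈ S} with hsdef
    have hs : MeasurableSet s := measurable_prodMk_left hS
    set I : ℝ≥0∞ := ∫⁻ y in s, φ y ∂lam with hI
    rcases eq_or_ne I ⊤ with hItop | hItop
    · rcases eq_or_lt_of_le (hwnn x) with hw0 | hw0
      · simp [← hw0]
      · have h1 : ENNReal.ofReal (w x) ≠ 0 := by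
          simpa [ENNReal.ofReal_eq_zero, not_le] using hw0
        have h2 : (lam Set.univ)⁻¹ ≠ 0 := by
          simp [ENNReal.inv_ne_zero, hfin.ne]
        rw [hItop]
        rw [ENNReal.mul_top h2, ENNReal.mul_top h1]
        exact le_top
    · -- I finite: real Jensen
      set G : X → ℝ := fun y => Φ (c * |g y| / t) with hG
      have hGnn : ∀ y, 0 ≤ G y := fun y =>
        hΦnn _ (by positivity)
      have hindnn : ∀ y, 0 ≤ s.indicator G y := fun y =>
        Set.indicator_nonneg (fun y _ => hGnn y) y
      have hI_eq : ∫⁻ y, ENNReal.ofReal (s.indicator G y) ∂lam = I := by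
        rw [hI, ← lintegral_indicator hs]
        congr 1
        funext y
        by_cases hy : y ∈ s <;> simp [hy, hφ, hG]
      have hindmeas : Measurable (s.indicator G) := hGmeas.indicator hs
      have hindint : Integrable (s.indicator G) lam := by
        refine ⟨hindmeas.aestronglyMeasurable, ?_⟩
        rw [hasFiniteIntegral_iff_ofReal (Filter.Eventually.of_forall hindnn)]
        rw [hI_eq]
        exact hItop.lt_top
      -- F
      set F : X → ℝ := s.indicator (fun y => c * |g y| / t) with hF
      have hFnn : ∀ y, 0 ≤ F y := fun y =>
        Set.indicator_nonneg (fun y _ => by positivity) y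
      have hFint : Integrable F lam :=
        ((hgint.abs.const_mul c).div_const t).indicator hs
      have hΦF : (Φ ∘ F) = s.indicator G := by
        funext y
        by_cases hy : y ∈ s <;> simp [Function.comp, hF, hG, hy, hΦ0]
      have jensen := hΦconv.map_average_le hΦc.continuousOn isClosed_Ici
        (Filter.Eventually.of_forall fun y => hFnn y) hFint (by rw [hΦF]; exact hindint)
      have jensen' : Φ (⨍ y, F y ∂lam) ≤ ⨍ y, s.indicator G y ∂lam := by
        rwa [show (fun x => Φ (F x)) = s.indicator G from hΦF] at jensen
      -- compute averages
      set J : ℝ := ∫ y in s, |g y| ∂lam with hJ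
      have hJnn : 0 ≤ J := integral_nonneg fun y => abs_nonneg _
      have havgF : ⨍ y, F y ∂lam = J / t := by
        rw [average_eq, integral_indicator hs]
        have : ∫ y in s, c * |g y| / t ∂lam = c * J / t := by
          rw [integral_div, integral_const_mul]
        rw [this, smul_eq_mul, measureReal_def, ← hc]
        field_simp
      have havgG : ⨍ y, s.indicator G y ∂lam = c⁻¹ * I.toReal := by
        rw [average_eq, smul_eq_mul]
        congr 1
        rw [integral_eq_lintegral_of_nonneg_ae (Filter.Eventually.of_forall hindnn)
          hindmeas.aestronglyMeasurable, hI_eq]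
      have hfx : |f x| ≤ J := by
        rw [hf x]
        calc |∫ y in s, g y ∂lam| ≤ ∫ y in s, |g y| ∂lam := by
              simpa [Real.norm_eq_abs] using
                norm_integral_le_integral_norm (μ := lam.restrict s) g
          _ = J := rfl
      have hreal : Φ (|f x| / t) ≤ c⁻¹ * I.toReal := by
        have h1 : Φ (|f x| / t) ≤ Φ (J / t) :=
          hΦmono (Set.mem_Ici.mpr (by positivity)) (Set.mem_Ici.mpr (by positivity))
            (by gcongr)
        calc Φ (|f x| / t) ≤ Φ (J / t) := h1
          _ = Φ (⨍ y, F y ∂lam) := by rw [havgF]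
          _ ≤ ⨍ y, s.indicator G y ∂lam := jensen'
          _ = c⁻¹ * I.toReal := havgG
      calc ENNReal.ofReal (w x * Φ (|f x| / t))
          ≤ ENNReal.ofReal (w x * (c⁻¹ * I.toReal)) :=
            ENNReal.ofReal_le_ofReal (mul_le_mul_of_nonneg_left hreal (hwnn x))
        _ = ENNReal.ofReal (w x) * (ENNReal.ofReal c⁻¹ * ENNReal.ofReal I.toReal) := by
            rw [ENNReal.ofReal_mul (hwnn x), ENNReal.ofReal_mul (by positivity)]
        _ = ENNReal.ofReal (w x) * ((lam Set.univ)⁻¹ * I) := by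
            rw [ENNReal.ofReal_inv_of_pos hc0, hc, ENNReal.ofReal_toReal hfin.ne,
              ENNReal.ofReal_toReal hItop]
  -- now integrate and swap
  set H : X × X → ℝ≥0∞ := S.indicator fun p => ENNReal.ofReal (w p.1) * φ p.2 with hH
  have hHmeas : Measurable H :=
    ((hwmeas.ennreal_ofReal.comp measurable_fst).mul
      (hφmeas.comp measurable_snd)).indicator hS
  have hsec : ∀ x, (∫⁻ y, H (x, y) ∂lam) =
      ENNReal.ofReal (w x) * ∫⁻ y in {y | (x, y) ∈ S}, φ y ∂lam := by
    intro x
    have hs : MeasurableSet {y | (x, y) ∈ S} := measurable_prodMk_left hS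
    have : ∀ y, H (x, y) =
        ({y | (x, y) ∈ S}).indicator (fun y => ENNReal.ofReal (w x) * φ y) y := by
      intro y
      by_cases hy : (x, y) ∈ S <;> simp [hH, Set.indicator_apply, hy]
    simp_rw [this]
    rw [lintegral_indicator hs, lintegral_const_mul _ hφmeas]
  have hcosec : ∀ y, (∫⁻ x, H (x, y) ∂lam) =
      φ y * ∫⁻ x in {x | (x, y) ∈ S}, ENNReal.ofReal (w x) ∂lam := by
    intro y
    have hs : MeasurableSet {x | (x, y) ∈ S} := measurable_prodMk_right hS
    have : ∀ x, H (x, y) =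
        ({x | (x, y) ∈ S}).indicator (fun x => φ y * ENNReal.ofReal (w x)) x := by
      intro x
      by_cases hx : (x, y) ∈ S <;> simp [hH, Set.indicator_apply, hx, mul_comm]
    simp_rw [this]
    rw [lintegral_indicator hs, lintegral_const_mul _ hwmeas.ennreal_ofReal]
  calc (∫⁻ x, ENNReal.ofReal (w x * Φ (|f x| / t)) ∂lam)
      ≤ ∫⁻ x, ENNReal.ofReal (w x) *
          ((lam Set.univ)⁻¹ * ∫⁻ y in {y | (x, y) ∈ S}, φ y ∂lam) ∂lam :=
        lintegral_mono key
    _ = ∫⁻ x, (lam Set.univ)⁻¹ * ∫⁻ y, H (x, y) ∂lam ∂lam := by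
        refine lintegral_congr fun x => ?_
        rw [hsec x]; ring
    _ = (lam Set.univ)⁻¹ * ∫⁻ x, ∫⁻ y, H (x, y) ∂lam ∂lam := by
        rw [lintegral_const_mul _ (hHmeas.lintegral_prod_right')]
    _ = (lam Set.univ)⁻¹ * ∫⁻ y, ∫⁻ x, H (x, y) ∂lam ∂lam := by
        rw [lintegral_lintegral_swap (f := fun x y => H (x, y)) hHmeas.aemeasurable]
    _ = (lam Set.univ)⁻¹ * ∫⁻ y, ENNReal.ofReal (Φ (c * |g y| / t)) *
          (∫⁻ x in {x | (x, y) ∈ S}, ENNReal.ofReal (w x) ∂lam) ∂lam := by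
        congr 1
        exact lintegral_congr fun y => hcosec y
end

section
/- Let λ be a measure on a measurable space X with 0 < λ(X) < ∞, let S ⊆ X × X be measurable, let g : X → ℝ be measurable and λ-integrable, set f x := ∫_{S_x} g dλ, and let Φ : ℝ → ℝ be continuous, nondecreasing on [0,∞), convex on [0,∞), with Φ(0) = 0. Let w₀ : X → ℝ be measurable with (λ(Sʸ)).toReal ≤ w₀(y) for every y ∈ X. If t > 0 satisfies ∫⁻_X ENNReal.ofReal (w₀ y * Φ (|g y| / t)) dλ(y) ≤ λ X, then ∫⁻_X ENNReal.ofReal (Φ (|f x| / ((λ X).toReal * t))) dλ(x) ≤ 1. -/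
open MeasureTheory ENNReal

theorem stmt_3 {X : Type*} [MeasurableSpace X] (lam : Measure X)
    (hpos : 0 < lam Set.univ) (hfin : lam Set.univ < ⊤)
    (S : Set (X × X)) (hS : MeasurableSet S)
    (g : X → ℝ) (hgmeas : Measurable g) (hgint : Integrable g lam)
    (f : X → ℝ) (hf : ∀ x, f x = ∫ y in {y | (x, y) ∈ S}, g y ∂lam)
    (Φ : ℝ → ℝ) (hΦc : Continuous Φ) (hΦmono : MonotoneOn Φ (Set.Ici 0))
    (hΦconv : ConvexOn ℝ (Set.Ici 0) Φ) (hΦ0 : Φ 0 = 0)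
    (w₀ : X → ℝ) (hw₀meas : Measurable w₀)
    (hw₀ : ∀ y, (lam {x | (x, y) ∈ S}).toReal ≤ w₀ y)
    (t : ℝ) (ht : 0 < t)
    (hle : (∫⁻ y, ENNReal.ofReal (w₀ y * Φ (|g y| / t)) ∂lam) ≤ lam Set.univ) :
    (∫⁻ x, ENNReal.ofReal (Φ (|f x| / ((lam Set.univ).toReal * t))) ∂lam) ≤ 1 := by
  haveI : IsFiniteMeasure lam := ⟨hfin⟩
  haveI : NeZero lam := ⟨fun h => by simp [h] at hpos⟩
  set L := (lam Set.univ).toReal with hLdef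
  have hL : 0 < L := ENNReal.toReal_pos hpos.ne' hfin.ne
  have hΦnn : ∀ r : ℝ, 0 ≤ r → 0 ≤ Φ r := fun r hr =>
    hΦ0 ▸ hΦmono Set.self_mem_Ici hr hr
  have hsec : ∀ x, MeasurableSet {y | (x, y) ∈ S} := fun x =>
    measurable_prodMk_left hS
  -- the ENNReal-valued integrand in y
  set c : X → ℝ≥0∞ := fun y => ENNReal.ofReal (Φ (|g y| / t)) with hc
  have hcmeas : Measurable c :=
    ENNReal.measurable_ofReal.comp (hΦc.measurable.comp ((hgmeas.abs).div_const t))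
  set F : X × X → ℝ≥0∞ := S.indicator (fun p => c p.2) with hF
  have hFmeas : Measurable F := (hcmeas.comp measurable_snd).indicator hS
  -- Tonelli
  have hinner_meas : Measurable fun x => ∫⁻ y, F (x, y) ∂lam :=
    hFmeas.lintegral_prod_right'
  have hB : (∫⁻ x, ∫⁻ y, F (x, y) ∂lam ∂lam)
      = ∫⁻ y, lam {x | (x, y) ∈ S} * c y ∂lam := by
    have hu : AEMeasurable (Function.uncurry fun x y => F (x, y)) (lam.prod lam) := by
      exact hFmeas.aemeasurable
    rw [lintegral_lintegral_swap hu]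
    refine lintegral_congr fun y => ?_
    have h1 : (fun x => F (x, y)) = ({x | (x, y) ∈ S}).indicator (fun _ => c y) := by
      funext x
      by_cases hxy : (x, y) ∈ S <;>
        simp [hF, Set.indicator_apply, Set.mem_setOf_eq, hxy]
    have hcos : MeasurableSet {x | (x, y) ∈ S} := measurable_prodMk_right hS
    rw [h1, lintegral_indicator hcos _, setLIntegral_const, mul_comm]
  have hA : (∫⁻ y, lam {x | (x, y) ∈ S} * c y ∂lam) ≤ lam Set.univ := by
    refine le_trans (lintegral_mono fun y => ?_) hle
    have h1 : lam {x | (x, y) ∈ S} ≤ ENNReal.ofReal (w₀ y) := by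
      rw [← ENNReal.ofReal_toReal (measure_lt_top lam _).ne]
      exact ENNReal.ofReal_le_ofReal (hw₀ y)
    calc lam {x | (x, y) ∈ S} * c y ≤ ENNReal.ofReal (w₀ y) * c y :=
          mul_le_mul_left h1 _
      _ = ENNReal.ofReal (w₀ y * Φ (|g y| / t)) := by
          rw [ENNReal.ofReal_mul ((ENNReal.toReal_nonneg).trans (hw₀ y))]
  have hfinx : ∀ᵐ x ∂lam, (∫⁻ y, F (x, y) ∂lam) < ⊤ := by
    refine ae_lt_top hinner_meas ?_
    rw [hB]
    exact (hA.trans_lt hfin).ne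
  -- pointwise Jensen, a.e.
  have hptwise : ∀ᵐ x ∂lam, ENNReal.ofReal (Φ (|f x| / (L * t)))
      ≤ ENNReal.ofReal L⁻¹ * ∫⁻ y, F (x, y) ∂lam := by
    filter_upwards [hfinx] with x hx
    set h : X → ℝ := ({y | (x, y) ∈ S}).indicator (fun y => |g y| / t) with hh
    have hhnn : ∀ y, 0 ≤ h y := fun y =>
      Set.indicator_nonneg (fun y _ => by positivity) y
    have hhint : Integrable h lam := ((hgint.abs).div_const t).indicator (hsec x)
    have hΦh_eq : ∀ y, ENNReal.ofReal (Φ (h y)) = F (x, y) := by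
      intro y
      by_cases hy : (x, y) ∈ S
      · simp [hh, hF, Set.indicator_of_mem, hy, Set.mem_setOf_eq, hc]
      · simp [hh, hF, Set.indicator_of_notMem, hy, Set.mem_setOf_eq, hΦ0]
    have hΦhmeas : Measurable fun y => Φ (h y) :=
      hΦc.measurable.comp (((hgmeas.abs).div_const t).indicator (hsec x))
    have hΦhint : Integrable (fun y => Φ (h y)) lam := by
      refine ⟨hΦhmeas.aestronglyMeasurable, ?_⟩
      rw [hasFiniteIntegral_iff_norm]
      calc (∫⁻ y, ENNReal.ofReal ‖Φ (h y)‖ ∂lam)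
          = ∫⁻ y, F (x, y) ∂lam := by
            refine lintegral_congr fun y => ?_
            rw [Real.norm_of_nonneg (hΦnn _ (hhnn y)), hΦh_eq]
        _ < ⊤ := hx
    -- Jensen
    have hjen : Φ (⨍ y, h y ∂lam) ≤ ⨍ y, Φ (h y) ∂lam :=
      hΦconv.map_average_le (hΦc.continuousOn) isClosed_Ici
        (Filter.Eventually.of_forall fun y => hhnn y) hhint hΦhint
    have havg : (⨍ y, h y ∂lam) = L⁻¹ * ∫ y, h y ∂lam := by
      rw [average_eq, smul_eq_mul, measureReal_def]
    have hintnn : 0 ≤ ∫ y, h y ∂lam := integral_nonneg hhnn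
    have havgnn : 0 ≤ ⨍ y, h y ∂lam := by
      rw [havg]; positivity
    -- |f x| / (L * t) ≤ ⨍ h
    have hfx : |f x| / (L * t) ≤ ⨍ y, h y ∂lam := by
      rw [havg, hh]
      rw [integral_indicator (hsec x)]
      have h1 : |f x| ≤ ∫ y in {y | (x, y) ∈ S}, |g y| ∂lam := by
        rw [hf x]
        simpa [Real.norm_eq_abs] using
          norm_integral_le_integral_norm (μ := lam.restrict {y | (x, y) ∈ S}) g
      have h2 : (∫ y in {y | (x, y) ∈ S}, |g y| / t ∂lam)
          = (∫ y in {y | (x, y) ∈ S}, |g y| ∂lam) / t := integral_div t _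
      have h3 : L⁻¹ * ((∫ y in {y | (x, y) ∈ S}, |g y| ∂lam) / t)
          = (∫ y in {y | (x, y) ∈ S}, |g y| ∂lam) / (L * t) := by
        field_simp
      rw [h2, h3]
      gcongr
    have hmono2 : Φ (|f x| / (L * t)) ≤ Φ (⨍ y, h y ∂lam) :=
      hΦmono (Set.mem_Ici.mpr (by positivity)) (Set.mem_Ici.mpr havgnn) hfx
    have hΦavg : (⨍ y, Φ (h y) ∂lam) = L⁻¹ * ∫ y, Φ (h y) ∂lam := by
      rw [average_eq, smul_eq_mul, measureReal_def]
    calc ENNReal.ofReal (Φ (|f x| / (L * t)))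
        ≤ ENNReal.ofReal (L⁻¹ * ∫ y, Φ (h y) ∂lam) := by
          exact ENNReal.ofReal_le_ofReal ((hmono2.trans hjen).trans_eq hΦavg)
      _ = ENNReal.ofReal L⁻¹ * ENNReal.ofReal (∫ y, Φ (h y) ∂lam) :=
          ENNReal.ofReal_mul (by positivity)
      _ = ENNReal.ofReal L⁻¹ * ∫⁻ y, F (x, y) ∂lam := by
          rw [ofReal_integral_eq_lintegral_ofReal hΦhint
            (Filter.Eventually.of_forall fun y => hΦnn _ (hhnn y))]
          congr 1
          exact lintegral_congr fun y => hΦh_eq y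
  calc (∫⁻ x, ENNReal.ofReal (Φ (|f x| / (L * t))) ∂lam)
      ≤ ∫⁻ x, ENNReal.ofReal L⁻¹ * ∫⁻ y, F (x, y) ∂lam ∂lam :=
        lintegral_mono_ae hptwise
    _ = ENNReal.ofReal L⁻¹ * ∫⁻ x, ∫⁻ y, F (x, y) ∂lam ∂lam :=
        lintegral_const_mul _ hinner_meas
    _ ≤ ENNReal.ofReal L⁻¹ * lam Set.univ := by
        rw [hB]; exact mul_le_mul_right hA _
    _ = 1 := by
        rw [← ENNReal.ofReal_toReal hfin.ne, ← hLdef,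
          ← ENNReal.ofReal_mul (by positivity), inv_mul_cancel₀ hL.ne', ENNReal.ofReal_one]
end

section
/- Let λ be a measure on a measurable space X with 0 < λ(X) < ∞, let S ⊆ X × X be measurable, let g : X → ℝ be measurable and λ-integrable, set f x := ∫_{S_x} g dλ, and let Φ : ℝ → ℝ be continuous, nondecreasing on [0,∞), convex on [0,∞), with Φ(0) = 0. Let w₀ : X → ℝ be measurable with (λ(Sʸ)).toReal ≤ w₀(y) for every y ∈ X. Then ‖f‖_Φ ≤ (λ X) * ‖g‖_{Φ, v}, where v : X → ℝ is the weight v(y) := w₀(y) / (λ X).toReal and the inequality and product are taken in the extended nonnegative reals. -/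
open MeasureTheory ENNReal

theorem stmt_4 {X : Type*} [MeasurableSpace X] (lam : Measure X)
    (hpos : 0 < lam Set.univ) (hfin : lam Set.univ < ⊤)
    (S : Set (X × X)) (hS : MeasurableSet S)
    (g : X → ℝ) (hgmeas : Measurable g) (hgint : Integrable g lam)
    (f : X → ℝ) (hf : ∀ x, f x = ∫ y in {y | (x, y) ∈ S}, g y ∂lam)
    (Φ : ℝ → ℝ) (hΦc : Continuous Φ) (hΦmono : MonotoneOn Φ (Set.Ici 0))
    (hΦconv : ConvexOn ℝ (Set.Ici 0) Φ) (hΦ0 : Φ 0 = 0)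
    (w₀ : X → ℝ) (hw₀meas : Measurable w₀)
    (hw₀ : ∀ y, (lam {x | (x, y) ∈ S}).toReal ≤ w₀ y) :
    luxW lam Φ (fun _ => 1) f ≤
      lam Set.univ * luxW lam Φ (fun y => w₀ y / (lam Set.univ).toReal) g := by
  have hFin : IsFiniteMeasure lam := ⟨hfin⟩
  have hNZ : NeZero lam := ⟨(Measure.measure_univ_ne_zero).1 hpos.ne'⟩
  set L : ℝ := (lam Set.univ).toReal with hLdef
  have hL0 : 0 < L := ENNReal.toReal_pos hpos.ne' hfin.ne
  have hLof : ENNReal.ofReal L = lam Set.univ := ENNReal.ofReal_toReal hfin.ne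
  -- nonnegativity of Φ on [0, ∞)
  have hΦnn : ∀ a : ℝ, 0 ≤ a → 0 ≤ Φ a := fun a ha => by
    have := hΦmono (Set.self_mem_Ici) (Set.mem_Ici.2 ha) ha
    linarith [hΦ0]
  -- key step
  have key : ∀ t : ℝ, 0 < t →
      (∫⁻ y, ENNReal.ofReal ((w₀ y / L) * Φ (|g y| / t)) ∂lam) ≤ 1 →
      luxW lam Φ (fun _ => 1) f ≤ lam Set.univ * ENNReal.ofReal t := by
    intro t ht hcond
    set ψ : X → ℝ := fun y => Φ (|g y| / t) with hψdef
    have hψmeas : Measurable ψ := hΦc.measurable.comp ((hgmeas.abs).div_const t)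
    have hψnn : ∀ y, 0 ≤ ψ y := fun y => hΦnn _ (by positivity)
    set G : X → ℝ≥0∞ := fun y => ENNReal.ofReal (ψ y) with hGdef
    have hGmeas : Measurable G := ENNReal.measurable_ofReal.comp hψmeas
    have hsec : ∀ x, MeasurableSet {y | (x, y) ∈ S} := fun x =>
      measurable_prodMk_left hS
    have hcosec : ∀ y, MeasurableSet {x | (x, y) ∈ S} := fun y =>
      measurable_prodMk_right hS
    -- the double (lin)integral
    have hFmeas : Measurable fun p : X × X => S.indicator (fun q => G q.2) p :=
      (hGmeas.comp measurable_snd).indicator hS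
    have hinner_meas : Measurable fun x => ∫⁻ y, S.indicator (fun q => G q.2) (x, y) ∂lam :=
      Measurable.lintegral_prod_right (f := fun x y => S.indicator (fun q => G q.2) (x, y))
        hFmeas
    have hswap : (∫⁻ x, ∫⁻ y, S.indicator (fun q => G q.2) (x, y) ∂lam ∂lam)
        = ∫⁻ y, ∫⁻ x, S.indicator (fun q => G q.2) (x, y) ∂lam ∂lam :=
      lintegral_lintegral_swap hFmeas.aemeasurable
    have hco : ∀ y, (∫⁻ x, S.indicator (fun q => G q.2) (x, y) ∂lam)
        = lam {x | (x, y) ∈ S} * G y := by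
      intro y
      have : ∀ x, S.indicator (fun q => G q.2) (x, y)
          = {x | (x, y) ∈ S}.indicator (fun _ => G y) x := by
        intro x
        by_cases h : (x, y) ∈ S <;> simp [Set.indicator, h]
      simp_rw [this]
      rw [lintegral_indicator (hcosec y), setLIntegral_const, mul_comm]
    -- bound on the double integral
    have hbound : (∫⁻ x, ∫⁻ y, S.indicator (fun q => G q.2) (x, y) ∂lam ∂lam)
        ≤ ENNReal.ofReal L := by
      rw [hswap]
      calc (∫⁻ y, ∫⁻ x, S.indicator (fun q => G q.2) (x, y) ∂lam ∂lam)
          = ∫⁻ y, lam {x | (x, y) ∈ S} * G y ∂lam := by simp_rw [hco]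
        _ ≤ ∫⁻ y, ENNReal.ofReal L * ENNReal.ofReal ((w₀ y / L) * ψ y) ∂lam := by
            apply lintegral_mono
            intro y
            have hw₀nn : 0 ≤ w₀ y := le_trans ENNReal.toReal_nonneg (hw₀ y)
            have h1 : lam {x | (x, y) ∈ S} ≤ ENNReal.ofReal (w₀ y) := by
              rw [← ENNReal.ofReal_toReal (measure_lt_top lam _).ne]
              exact ENNReal.ofReal_le_ofReal (hw₀ y)
            calc lam {x | (x, y) ∈ S} * G y ≤ ENNReal.ofReal (w₀ y) * ENNReal.ofReal (ψ y) :=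
                  mul_le_mul' h1 le_rfl
              _ = ENNReal.ofReal (w₀ y * ψ y) := (ENNReal.ofReal_mul hw₀nn).symm
              _ = ENNReal.ofReal (L * ((w₀ y / L) * ψ y)) := by
                  rw [show L * ((w₀ y / L) * ψ y) = w₀ y * ψ y by
                    field_simp]
              _ = ENNReal.ofReal L * ENNReal.ofReal ((w₀ y / L) * ψ y) :=
                  ENNReal.ofReal_mul hL0.le
        _ = ENNReal.ofReal L * ∫⁻ y, ENNReal.ofReal ((w₀ y / L) * ψ y) ∂lam :=
            lintegral_const_mul _ (ENNReal.measurable_ofReal.comp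
              (((hw₀meas.div_const L).mul hψmeas)))
        _ ≤ ENNReal.ofReal L * 1 := mul_le_mul' le_rfl hcond
        _ = ENNReal.ofReal L := mul_one _
    -- a.e. finiteness of the inner integral
    have hae : ∀ᵐ x ∂lam, (∫⁻ y, S.indicator (fun q => G q.2) (x, y) ∂lam) < ⊤ :=
      ae_lt_top hinner_meas (lt_of_le_of_lt hbound ofReal_lt_top).ne
    -- pointwise estimate
    have hpt : ∀ᵐ x ∂lam, ENNReal.ofReal ((1 : ℝ) * Φ (|f x| / (L * t)))
        ≤ (ENNReal.ofReal L)⁻¹ * ∫⁻ y, S.indicator (fun q => G q.2) (x, y) ∂lam := by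
      filter_upwards [hae] with x hx
      -- identify inner lintegral with indicator over the section
      have hindic : ∀ y, S.indicator (fun q => G q.2) (x, y)
          = ENNReal.ofReal (({y | (x, y) ∈ S}).indicator ψ y) := by
        intro y
        by_cases h : (x, y) ∈ S <;> simp [Set.indicator, h, hGdef]
      have hxfin : (∫⁻ y, ENNReal.ofReal (({y | (x, y) ∈ S}).indicator ψ y) ∂lam) < ⊤ := by
        simpa [← hindic] using hx
      -- indicator functions
      set u : X → ℝ := ({y | (x, y) ∈ S}).indicator (fun y => |g y| / t) with hudef
      have huint : Integrable u lam := ((hgint.abs.div_const t).indicator (hsec x))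
      have hunn : ∀ y, 0 ≤ u y := fun y =>
        Set.indicator_nonneg (fun y _ => by positivity) y
      have hcomp : ∀ y, Φ (u y) = ({y | (x, y) ∈ S}).indicator ψ y := by
        intro y
        by_cases h : y ∈ {y | (x, y) ∈ S} <;> simp [hudef, Set.indicator, h, hΦ0, hψdef]
      have hψind_nn : ∀ y, 0 ≤ ({y | (x, y) ∈ S}).indicator ψ y := fun y =>
        Set.indicator_nonneg (fun y _ => hψnn y) y
      have hΦuint : Integrable (fun y => Φ (u y)) lam := by
        refine ⟨(((hψmeas.indicator (hsec x))).aestronglyMeasurable).congr ?_, ?_⟩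
        · filter_upwards with y using (hcomp y).symm
        · rw [hasFiniteIntegral_iff_ofReal (Filter.Eventually.of_forall fun y =>
            (hcomp y) ▸ hψind_nn y)]
          simpa [hcomp] using hxfin
      -- Jensen
      have hjensen : Φ (⨍ y, u y ∂lam) ≤ ⨍ y, Φ (u y) ∂lam :=
        hΦconv.map_average_le hΦc.continuousOn isClosed_Ici
          (Filter.Eventually.of_forall fun y => Set.mem_Ici.2 (hunn y)) huint hΦuint
      have havg : (⨍ y, u y ∂lam) = L⁻¹ * ∫ y, u y ∂lam := by
        rw [average_eq, smul_eq_mul]; rfl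
      -- |f x| / (L*t) ≤ ⨍ u
      have hfx : |f x| / (L * t) ≤ ⨍ y, u y ∂lam := by
        have h1 : |f x| ≤ ∫ y in {y | (x, y) ∈ S}, |g y| ∂lam := by
          rw [hf x]
          simpa [Real.norm_eq_abs] using
            norm_integral_le_integral_norm (μ := lam.restrict {y | (x, y) ∈ S}) g
        have h2 : (∫ y, u y ∂lam) = (∫ y in {y | (x, y) ∈ S}, |g y| ∂lam) / t := by
          rw [hudef]
          rw [show ({y | (x, y) ∈ S}).indicator (fun y => |g y| / t)
              = fun y => (({y | (x, y) ∈ S}).indicator (fun y => |g y|) y) / t by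
            funext y; by_cases h : y ∈ {y | (x, y) ∈ S} <;> simp [Set.indicator, h]]
          rw [integral_div, integral_indicator (hsec x)]
        rw [havg, h2]
        have h3 : L⁻¹ * ((∫ y in {y | (x, y) ∈ S}, |g y| ∂lam) / t)
            = (∫ y in {y | (x, y) ∈ S}, |g y| ∂lam) / (L * t) := by
          field_simp
        rw [h3]
        gcongr
      have havgnn : 0 ≤ ⨍ y, u y ∂lam := le_trans (by positivity) hfx
      have hmono : Φ (|f x| / (L * t)) ≤ Φ (⨍ y, u y ∂lam) :=
        hΦmono (Set.mem_Ici.2 (by positivity)) (Set.mem_Ici.2 havgnn) hfx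
      have h3 : Φ (|f x| / (L * t)) ≤ ⨍ y, Φ (u y) ∂lam := le_trans hmono hjensen
      have h4 : ENNReal.ofReal (⨍ y, Φ (u y) ∂lam)
          = (ENNReal.ofReal L)⁻¹ * ∫⁻ y, S.indicator (fun q => G q.2) (x, y) ∂lam := by
        rw [average_eq, smul_eq_mul, ENNReal.ofReal_mul (by positivity),
          ofReal_integral_eq_lintegral_ofReal hΦuint
            (Filter.Eventually.of_forall fun y => le_of_le_of_eq (hψind_nn y) (hcomp y).symm)]
        congr 1
        · exact ENNReal.ofReal_inv_of_pos hL0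
        · simp_rw [hcomp, ← hindic]
      rw [one_mul]
      calc ENNReal.ofReal (Φ (|f x| / (L * t))) ≤ ENNReal.ofReal (⨍ y, Φ (u y) ∂lam) :=
            ENNReal.ofReal_le_ofReal h3
        _ = _ := h4
    -- conclude the lintegral bound for f
    have hmain : (∫⁻ x, ENNReal.ofReal ((1 : ℝ) * Φ (|f x| / (L * t))) ∂lam) ≤ 1 := by
      calc (∫⁻ x, ENNReal.ofReal ((1 : ℝ) * Φ (|f x| / (L * t))) ∂lam)
          ≤ ∫⁻ x, (ENNReal.ofReal L)⁻¹ * ∫⁻ y, S.indicator (fun q => G q.2) (x, y) ∂lam ∂lam :=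
            lintegral_mono_ae hpt
        _ = (ENNReal.ofReal L)⁻¹ * ∫⁻ x, ∫⁻ y, S.indicator (fun q => G q.2) (x, y) ∂lam ∂lam :=
            lintegral_const_mul _ hinner_meas
        _ ≤ (ENNReal.ofReal L)⁻¹ * ENNReal.ofReal L := mul_le_mul' le_rfl hbound
        _ = 1 := ENNReal.inv_mul_cancel (by simpa [hLof] using hpos.ne') ofReal_ne_top
    -- use s = L * t as witness
    have hmem : ENNReal.ofReal (L * t) ∈ {r : ℝ≥0∞ | ∃ s : ℝ, 0 < s ∧
        (∫⁻ x, ENNReal.ofReal ((fun _ : X => (1:ℝ)) x * Φ (|f x| / s)) ∂lam) ≤ 1 ∧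
        r = ENNReal.ofReal s} :=
      ⟨L * t, by positivity, hmain, rfl⟩
    calc luxW lam Φ (fun _ => 1) f ≤ ENNReal.ofReal (L * t) := sInf_le hmem
      _ = ENNReal.ofReal L * ENNReal.ofReal t := ENNReal.ofReal_mul hL0.le
      _ = lam Set.univ * ENNReal.ofReal t := by rw [hLof]
  -- now conclude from key via sInf
  set A : Set ℝ≥0∞ := {r | ∃ t : ℝ, 0 < t ∧
    (∫⁻ y, ENNReal.ofReal ((w₀ y / L) * Φ (|g y| / t)) ∂lam) ≤ 1 ∧ r = ENNReal.ofReal t} with hA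
  have hrhs : luxW lam Φ (fun y => w₀ y / L) g = sInf A := rfl
  rw [hrhs]
  rcases Set.eq_empty_or_nonempty A with hAe | hAne
  · rw [hAe, sInf_empty, ENNReal.mul_top hpos.ne']
    exact le_top
  · haveI : Nonempty A := hAne.to_subtype
    rw [sInf_eq_iInf']
    rw [ENNReal.mul_iInf (fun h => absurd h hfin.ne)]
    refine le_iInf fun r => ?_
    obtain ⟨t, ht, hcond, hrt⟩ := r.2
    rw [hrt]
    exact key t ht hcond
end

section
/- Let λ be a measure on a measurable space X, let p > 1 be real, let c_p := (p-1)^(p-1) / p^p, let w : X → ℝ be measurable with w(x) > 0 for all x, and let h : X → ℝ be measurable such that the function x ↦ w(x)^(1-p) * |h(x)|^p is λ-integrable. Then the infimum over real k > 0 of (1/k) * (1 + ∫_X w(x) * c_p * (k * |h(x)| / w(x))^p dλ(x)) equals (∫_X w(x)^(1-p) * |h(x)|^p dλ(x))^(1/p), the exponentiations being real powers (rpow) and the infimum being taken in ℝ. -/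
open MeasureTheory

lemma eq_of_log_eq {x y : ℝ} (hx : 0 < x) (hy : 0 < y) (hl : Real.log x = Real.log y) :
    x = y := by
  rw [← Real.exp_log hx, ← Real.exp_log hy, hl]

lemma key_ineq {p : ℝ} (hp : 1 < p) {A k : ℝ} (hA : 0 ≤ A) (hk : 0 < k) :
    A ^ (1/p) ≤ 1/k + ((p-1)^(p-1)/p^p) * A * k ^ (p-1) := by
  have hp0 : (0:ℝ) < p := by linarith
  have hp1 : (0:ℝ) < p - 1 := by linarith
  have hc : (0:ℝ) < (p-1)^(p-1)/p^p :=
    div_pos (Real.rpow_pos_of_pos hp1 _) (Real.rpow_pos_of_pos hp0 _)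
  have hkp : (0:ℝ) < k ^ (p-1) := Real.rpow_pos_of_pos hk _
  rcases hA.eq_or_lt with hA0 | hA0
  · rw [← hA0, Real.zero_rpow (by positivity)]
    have : 0 ≤ ((p-1)^(p-1)/p^p) * 0 * k ^ (p-1) := by simp
    have h2 : 0 < 1/k := by positivity
    linarith
  · have hq2 : (0:ℝ) < p * (((p-1)^(p-1)/p^p) * A * k ^ (p-1)) :=
      mul_pos hp0 (mul_pos (mul_pos hc hA0) hkp)
    have hq1 : (0:ℝ) < p / ((p-1)*k) := div_pos hp0 (mul_pos hp1 hk)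
    have h1 := Real.geom_mean_le_arith_mean2_weighted
      (w₁ := (p-1)/p) (w₂ := 1/p) (p₁ := p/((p-1)*k))
      (p₂ := p * (((p-1)^(p-1)/p^p) * A * k ^ (p-1)))
      (by positivity) (by positivity) hq1.le hq2.le (by field_simp; ring)
    have harith : ((p-1)/p) * (p/((p-1)*k)) + (1/p) * (p * (((p-1)^(p-1)/p^p) * A * k ^ (p-1)))
        = 1/k + ((p-1)^(p-1)/p^p) * A * k ^ (p-1) := by
      field_simp
    have hgeom : (p/((p-1)*k)) ^ ((p-1)/p) * (p * (((p-1)^(p-1)/p^p) * A * k ^ (p-1))) ^ (1/p)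
        = A ^ (1/p) := by
      apply eq_of_log_eq (by positivity) (Real.rpow_pos_of_pos hA0 _)
      rw [Real.log_mul (Real.rpow_pos_of_pos hq1 _).ne' (Real.rpow_pos_of_pos hq2 _).ne',
        Real.log_rpow hq1, Real.log_rpow hq2, Real.log_rpow hA0,
        Real.log_div hp0.ne' (mul_pos hp1 hk).ne',
        Real.log_mul hp1.ne' hk.ne',
        Real.log_mul hp0.ne' (mul_pos (mul_pos hc hA0) hkp).ne',
        Real.log_mul (mul_pos hc hA0).ne' hkp.ne',
        Real.log_mul hc.ne' hA0.ne',
        Real.log_rpow hk,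
        Real.log_div (Real.rpow_pos_of_pos hp1 _).ne' (Real.rpow_pos_of_pos hp0 _).ne',
        Real.log_rpow hp1, Real.log_rpow hp0]
      field_simp
      ring
    calc A ^ (1/p) = _ := hgeom.symm
      _ ≤ _ := h1
      _ = _ := harith

lemma key_eq {p : ℝ} (hp : 1 < p) {A : ℝ} (hA : 0 < A) :
    1/(p/((p-1)*A^(1/p))) + ((p-1)^(p-1)/p^p) * A * (p/((p-1)*A^(1/p))) ^ (p-1)
      = A ^ (1/p) := by
  have hp0 : (0:ℝ) < p := by linarith
  have hp1 : (0:ℝ) < p - 1 := by linarith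
  have hc : (0:ℝ) < (p-1)^(p-1)/p^p :=
    div_pos (Real.rpow_pos_of_pos hp1 _) (Real.rpow_pos_of_pos hp0 _)
  have hA1 : (0:ℝ) < A ^ (1/p) := Real.rpow_pos_of_pos hA _
  have hk0 : (0:ℝ) < p/((p-1)*A^(1/p)) := div_pos hp0 (mul_pos hp1 hA1)
  have hterm : ((p-1)^(p-1)/p^p) * A * (p/((p-1)*A^(1/p))) ^ (p-1) = A ^ (1/p) / p := by
    apply eq_of_log_eq (mul_pos (mul_pos hc hA) (Real.rpow_pos_of_pos hk0 _))
      (by positivity)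
    rw [Real.log_mul (mul_pos hc hA).ne' (Real.rpow_pos_of_pos hk0 _).ne',
      Real.log_mul hc.ne' hA.ne', Real.log_rpow hk0,
      Real.log_div (Real.rpow_pos_of_pos hp1 _).ne' (Real.rpow_pos_of_pos hp0 _).ne',
      Real.log_rpow hp1, Real.log_rpow hp0,
      Real.log_div hp0.ne' (mul_pos hp1 hA1).ne',
      Real.log_mul hp1.ne' hA1.ne', Real.log_rpow hA,
      Real.log_div hA1.ne' hp0.ne', Real.log_rpow hA]
    field_simp
    ring
  rw [hterm, one_div_div]
  field_simp
  ring

theorem stmt_14 {X : Type*} [MeasurableSpace X] (lam : Measure X)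
    (p : ℝ) (hp : 1 < p)
    (w : X → ℝ) (hwmeas : Measurable w) (hwpos : ∀ x, 0 < w x)
    (h : X → ℝ) (hhmeas : Measurable h)
    (hint : Integrable (fun x => w x ^ (1 - p) * |h x| ^ p) lam) :
    sInf {v : ℝ | ∃ k : ℝ, 0 < k ∧
      v = (1 / k) *
        (1 + ∫ x, w x * (((p - 1) ^ (p - 1) / p ^ p) * (k * |h x| / w x) ^ p) ∂lam)} =
      (∫ x, w x ^ (1 - p) * |h x| ^ p ∂lam) ^ (1 / p) := by
  have hp0 : (0:ℝ) < p := by linarith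
  have hp1 : (0:ℝ) < p - 1 := by linarith
  have hc : (0:ℝ) < (p-1)^(p-1)/p^p :=
    div_pos (Real.rpow_pos_of_pos hp1 _) (Real.rpow_pos_of_pos hp0 _)
  set A := ∫ x, w x ^ (1 - p) * |h x| ^ p ∂lam with hAdef
  have hA0 : 0 ≤ A := integral_nonneg fun x =>
    mul_nonneg (Real.rpow_nonneg (hwpos x).le _) (Real.rpow_nonneg (abs_nonneg _) _)
  have hval : ∀ k : ℝ, 0 < k →
      (1 / k) * (1 + ∫ x, w x * (((p - 1) ^ (p - 1) / p ^ p) * (k * |h x| / w x) ^ p) ∂lam)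
        = 1/k + ((p-1)^(p-1)/p^p) * A * k ^ (p-1) := by
    intro k hk
    have heq : (fun x => w x * (((p - 1) ^ (p - 1) / p ^ p) * (k * |h x| / w x) ^ p))
        = fun x => (((p-1)^(p-1)/p^p) * k ^ p) * (w x ^ (1 - p) * |h x| ^ p) := by
      funext x
      have hw := hwpos x
      have hwp : w x ^ p ≠ 0 := (Real.rpow_pos_of_pos hw p).ne'
      rw [Real.div_rpow (by positivity) hw.le, Real.mul_rpow hk.le (abs_nonneg _),
        Real.rpow_sub hw, Real.rpow_one]
      field_simp
    rw [heq, integral_const_mul, ← hAdef]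
    have hkk : k ^ (p - 1) = k ^ p / k := by
      rw [Real.rpow_sub hk, Real.rpow_one]
    rw [hkk]
    field_simp
  have hbdd : BddBelow {v : ℝ | ∃ k : ℝ, 0 < k ∧
      v = (1 / k) *
        (1 + ∫ x, w x * (((p - 1) ^ (p - 1) / p ^ p) * (k * |h x| / w x) ^ p) ∂lam)} := by
    refine ⟨A ^ (1/p), ?_⟩
    rintro v ⟨k, hk, rfl⟩
    rw [hval k hk]
    exact key_ineq hp hA0 hk
  apply le_antisymm
  · rcases hA0.eq_or_lt with h0 | h0
    · rw [← h0, Real.zero_rpow (by positivity)]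
      apply le_of_forall_pos_le_add
      intro ε hε
      have hk : (0:ℝ) < 1/ε := by positivity
      calc sInf _ ≤ (1 / (1/ε)) *
            (1 + ∫ x, w x * (((p - 1) ^ (p - 1) / p ^ p) * ((1/ε) * |h x| / w x) ^ p) ∂lam) :=
            csInf_le hbdd ⟨1/ε, hk, rfl⟩
        _ = 1/(1/ε) + ((p-1)^(p-1)/p^p) * A * (1/ε) ^ (p-1) := hval _ hk
        _ = ε := by rw [← h0]; simp
        _ ≤ 0 + ε := by linarith
    · have hA1 : (0:ℝ) < A ^ (1/p) := Real.rpow_pos_of_pos h0 _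
      have hk0 : (0:ℝ) < p/((p-1)*A^(1/p)) := div_pos hp0 (mul_pos hp1 hA1)
      calc sInf _ ≤ (1 / (p/((p-1)*A^(1/p)))) *
            (1 + ∫ x, w x * (((p - 1) ^ (p - 1) / p ^ p) *
              ((p/((p-1)*A^(1/p))) * |h x| / w x) ^ p) ∂lam) :=
            csInf_le hbdd ⟨_, hk0, rfl⟩
        _ = A ^ (1/p) := by rw [hval _ hk0]; exact key_eq hp h0
  · refine le_csInf ?_ ?_
    · exact ⟨_, 1, one_pos, rfl⟩
    rintro v ⟨k, hk, rfl⟩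
    rw [hval k hk]
    exact key_ineq hp hA0 hk
end
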